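/- For every number of routers k ≥ 2, the competitive ratio of Greedy on instances all of whose packets have length 1 or 2 is at least 2 − 1/2^{k−1} (for any tie-breaking rule): for every ε > 0 and every constant b, there exists an instance I on k routers, all of whose packets have length 1 or 2, such that Greedy(I) > (2 − 1/2^{k−1} − ε)·Opt(I) + b. -/

import Mathlib

/-!
# Packet forwarding on a line network

There are `k` active routers `1, …, k`; router `i` forwards packets to router `i+1`.
An instance is a finite collection of packets; packet `p` has a release time `rel p : ℕ`,
a start router `start p ∈ {1, …, k}` and a length `len p ≥ 1` with
`start p + len p − 1 ≤ k`; `p` must be forwarded by routers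
`start p, start p + 1, …, start p + len p − 1` in this order.
-/

/-- An instance of online packet forwarding on a line network with `k` active routers.
Packets are indexed by `Fin n`. -/
structure PInstance (k : ℕ) where
  n : ℕ
  rel : Fin n → ℕ
  start : Fin n → ℕ
  len : Fin n → ℕ

namespace PInstance

variable {k : ℕ}

/-- The instance is well-formed: start routers are at least `1`, lengths are at least `1`,
and every packet fits on the line: `start p + len p − 1 ≤ k`. -/
def Valid (I : PInstance k) : Prop :=
  ∀ p, 1 ≤ I.start p ∧ 1 ≤ I.len p ∧ I.start p + I.len p ≤ k + 1

/-- All packets of the instance have length `1` or `2`. -/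
def Short (I : PInstance k) : Prop :=
  ∀ p, I.len p = 1 ∨ I.len p = 2

/-- A schedule assigns to each packet `p` and each hop index `j < len p` (corresponding to
router `start p + j`) the time step at which that router forwards `p`.  Values at
hop indices `j ≥ len p` are irrelevant. -/
abbrev Sched (I : PInstance k) := Fin I.n → ℕ → ℕ

/-- `arr I S p j` is the time from which hop `j` of packet `p` is available:
packet `p` is available at its start router from time `rel p`, and a packet forwarded
at time `t` is available at the next router from time `t + 1`. -/
def arr (I : PInstance k) (S : Sched I) (p : Fin I.n) : ℕ → ℕ
  | 0 => I.rel p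
  | j + 1 => S p j + 1

/-- Feasibility of a schedule: every hop is forwarded no earlier than the time from which
it is available (this includes releases and the order of the hops), and each router
forwards at most one packet in each time step. -/
def Feasible (I : PInstance k) (S : Sched I) : Prop :=
  (∀ p j, j < I.len p → arr I S p j ≤ S p j) ∧
  (∀ p q jp jq, jp < I.len p → jq < I.len q →
    I.start p + jp = I.start q + jq → S p jp = S q jq → p = q)

/-- Completion time `C(p)`: one plus the time step in which the last router forwards `p`. -/
def comp (I : PInstance k) (S : Sched I) (p : Fin I.n) : ℕ :=
  S p (I.len p - 1) + 1

/-- Flow time of packet `p`: `C(p) − r(p)`. -/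
def flowTime (I : PInstance k) (S : Sched I) (p : Fin I.n) : ℕ :=
  comp I S p - I.rel p

/-- Cost of a schedule: the maximum flow time over all packets of the instance. -/
def cost (I : PInstance k) (S : Sched I) : ℕ :=
  Finset.univ.sup (flowTime I S)

/-- `Opt(I)`: the minimum cost over all feasible schedules. -/
noncomputable def opt (I : PInstance k) : ℕ :=
  sInf {c | ∃ S : Sched I, Feasible I S ∧ cost I S = c}

/-- Hop `j` of packet `p` is waiting (available but not yet forwarded) at time `t`. -/
def Waiting (I : PInstance k) (S : Sched I) (p : Fin I.n) (j t : ℕ) : Prop :=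
  j < I.len p ∧ arr I S p j ≤ t ∧ t ≤ S p j

/-- Remaining length `ℓ(p,t)`: the number of routers that still need to forward `p`
at time `t` (under schedule `S`). -/
noncomputable def remLen (I : PInstance k) (S : Sched I) (p : Fin I.n) (t : ℕ) : ℕ :=
  Set.ncard {j : ℕ | j < I.len p ∧ t ≤ S p j}

/-- Priority `π(p,t) = (t − r(p)) + ℓ(p,t)`. -/
noncomputable def prio (I : PInstance k) (S : Sched I) (p : Fin I.n) (t : ℕ) : ℕ :=
  (t - I.rel p) + remLen I S p t

/-- A schedule is zealous if, at every time step and every router at which some packet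
is available (waiting), it forwards a packet there. -/
def Zealous (I : PInstance k) (S : Sched I) : Prop :=
  ∀ t i, (∃ p j, Waiting I S p j t ∧ I.start p + j = i) →
    ∃ q jq, Waiting I S q jq t ∧ I.start q + jq = i ∧ S q jq = t

/-- `S` is a schedule that Greedy (with some tie-breaking rule) produces: it is feasible,
and in every time step, every router at which at least one packet is waiting forwards a
waiting packet of maximum priority among the packets waiting there. -/
def IsGreedy (I : PInstance k) (S : Sched I) : Prop :=
  Feasible I S ∧
  ∀ t i, (∃ p j, Waiting I S p j t ∧ I.start p + j = i) →
    ∃ q jq, Waiting I S q jq t ∧ I.start q + jq = i ∧ S q jq = t ∧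
      ∀ p j, Waiting I S p j t → I.start p + j = i → prio I S p t ≤ prio I S q t

/-- The number of packets released by time `t` that still need to be forwarded by
router `i` at time `t` under schedule `S`. -/
noncomputable def needs (I : PInstance k) (S : Sched I) (i t : ℕ) : ℕ :=
  Set.ncard {p : Fin I.n | I.rel p ≤ t ∧ ∃ j, j < I.len p ∧ I.start p + j = i ∧ t ≤ S p j}

end PInstance

namespace GreedyLB

/-- Scale: `F = 2^(k-1) * M`. -/
def Fv (k M : ℕ) : ℕ := 2 ^ (k - 1) * M

/-- Number of length-1 packets at stage `i` (router `i`). -/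
def pp (k M i : ℕ) : ℕ := if i = k then Fv k M else 2 ^ (k - 1 - i) * M

/-- Number of length-2 packets at stage `i` (router `i`). -/
def xx (k M i : ℕ) : ℕ := if 1 ≤ i ∧ i < k then Fv k M - 2 ^ (k - 1 - i) * M else 0

/-- Release time of stage `i`. -/
def tau (k M i : ℕ) : ℕ := ∑ j ∈ Finset.Ico 1 i, (xx k M j + 1)

/-- The hard instance. Stage of packet `v` is `v / F + 1`; within a stage, the
first `pp` indices are length-1 packets (released at `tau`), the rest length-2
(released at `tau + 2`). -/
def Inst (k M : ℕ) : PInstance k where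
  n := k * Fv k M
  rel := fun v => tau k M ((v : ℕ) / Fv k M + 1) +
    (if (v : ℕ) % Fv k M < pp k M ((v : ℕ) / Fv k M + 1) then 0 else 2)
  start := fun v => (v : ℕ) / Fv k M + 1
  len := fun v => if (v : ℕ) % Fv k M < pp k M ((v : ℕ) / Fv k M + 1) then 1 else 2

/-- Stage of a packet index. -/
def stg (k M v : ℕ) : ℕ := v / Fv k M + 1

/-- Group of length-1 packets of stage `i`. -/
def Pg (k M i : ℕ) : Finset (Fin (Inst k M).n) :=
  Finset.univ.filter (fun v => stg k M (v : ℕ) = i ∧ (v : ℕ) % Fv k M < pp k M i)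

/-- Group of length-2 packets of stage `i`. -/
def Xg (k M i : ℕ) : Finset (Fin (Inst k M).n) :=
  Finset.univ.filter (fun v => stg k M (v : ℕ) = i ∧ ¬ (v : ℕ) % Fv k M < pp k M i)

lemma Fpos {k M : ℕ} (hM : 2 ≤ M) : 0 < Fv k M :=
  Nat.mul_pos (Nat.pow_pos (by norm_num)) (by omega)

lemma pp_le_F {k M : ℕ} (i : ℕ) : pp k M i ≤ Fv k M := by
  unfold pp Fv
  split
  · exact le_rfl
  · exact Nat.mul_le_mul_right M (Nat.pow_le_pow_right (by norm_num) (by omega))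

lemma pp_pos {k M : ℕ} (hM : 2 ≤ M) (i : ℕ) : 2 ≤ pp k M i := by
  have h1 : M ≤ 2 ^ (k - 1 - i) * M := Nat.le_mul_of_pos_left M (Nat.pow_pos (by norm_num))
  have h2 : M ≤ 2 ^ (k - 1) * M := Nat.le_mul_of_pos_left M (Nat.pow_pos (by norm_num))
  unfold pp Fv
  split <;> omega

lemma pp_add_xx {k M : ℕ} (i : ℕ) (h1 : 1 ≤ i) (h2 : i < k) :
    pp k M i + xx k M i = Fv k M := by
  have h := pp_le_F (k := k) (M := M) i
  unfold pp at h ⊢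
  rw [if_neg (by omega)] at h ⊢
  unfold xx
  rw [if_pos ⟨h1, h2⟩]
  omega

/-- Key relation: `xx i = xx (i-1) + pp i` for `1 ≤ i < k`. -/
lemma xx_rec {k M : ℕ} (hk : 2 ≤ k) (i : ℕ) (h1 : 1 ≤ i) (h2 : i < k) :
    xx k M i = xx k M (i - 1) + pp k M i := by
  unfold xx pp
  rcases Nat.eq_or_lt_of_le h1 with h | h
  · -- i = 1
    subst h
    rw [if_pos ⟨h1, h2⟩, if_neg (by omega), if_neg (by omega)]
    have e2 : ∀ a, k - 1 = a + 1 → Fv k M = 2 ^ a * M + 2 ^ a * M := by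
      intro a ha; unfold Fv; rw [ha, pow_succ]; ring
    have e2' := e2 (k - 1 - 1) (by omega)
    omega
  · -- 2 ≤ i
    rw [if_pos ⟨h1, h2⟩, if_pos ⟨by omega, by omega⟩, if_neg (by omega)]
    have e1 : k - 1 - (i - 1) = (k - 1 - i) + 1 := by omega
    have e2 : (2:ℕ) ^ ((k - 1 - i) + 1) * M = 2 ^ (k - 1 - i) * M + 2 ^ (k - 1 - i) * M := by ring
    have e4 : 2 ^ (k - 1 - (i - 1)) * M ≤ Fv k M := by
      unfold Fv
      exact Nat.mul_le_mul_right M (Nat.pow_le_pow_right (by norm_num) (by omega))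
    rw [e1, e2] at e4
    unfold Fv at e4 ⊢
    rw [e1, e2]
    omega

lemma xx_pos {k M : ℕ} (hk : 2 ≤ k) (hM : 2 ≤ M) (i : ℕ) (h1 : 1 ≤ i) (h2 : i < k) :
    2 ≤ xx k M i := by
  have h3 := xx_rec (M := M) hk i h1 h2
  have h4 := pp_pos (k := k) hM i
  omega

lemma xx_le_F {k M : ℕ} (i : ℕ) : xx k M i ≤ Fv k M := by
  unfold xx; split
  · omega
  · exact Nat.zero_le _

lemma xx_zero {k M : ℕ} : xx k M 0 = 0 := by unfold xx; rw [if_neg (by omega)]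

lemma tau_succ {k M : ℕ} (j : ℕ) (h : 1 ≤ j) :
    tau k M (j + 1) = tau k M j + (xx k M j + 1) := by
  unfold tau
  rw [Finset.sum_Ico_succ_top h]

lemma tau_one {k M : ℕ} : tau k M 1 = 0 := by unfold tau; simp

lemma tau_pred {k M : ℕ} (i : ℕ) (h : 2 ≤ i) :
    tau k M i = tau k M (i - 1) + xx k M (i - 1) + 1 := by
  have h2 := tau_succ (k := k) (M := M) (i - 1) (by omega)
  have e : i - 1 + 1 = i := by omega
  rw [e] at h2
  omega

end GreedyLB
namespace GreedyLB

section Struct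

variable {k M : ℕ}

lemma pred_mul (a b : ℕ) (h : 1 ≤ a) : (a - 1) * b + b = a * b := by
  obtain ⟨c, rfl⟩ : ∃ c, a = c + 1 := ⟨a - 1, by omega⟩
  simp [Nat.add_mul]

lemma stg_ge (v : ℕ) : 1 ≤ stg k M v := Nat.succ_le_succ (Nat.zero_le _)

lemma stg_le (hM : 2 ≤ M) (v : Fin (Inst k M).n) : stg k M (v : ℕ) ≤ k := by
  have hv : (v : ℕ) < k * Fv k M := v.2
  have hF := Fpos (k := k) hM
  unfold stg
  have h2 : (v : ℕ) / Fv k M < k := by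
    rw [Nat.div_lt_iff_lt_mul hF]
    omega
  exact h2

lemma rv_lt (hM : 2 ≤ M) (v : Fin (Inst k M).n) : (v : ℕ) % Fv k M < Fv k M :=
  Nat.mod_lt _ (Fpos hM)

lemma v_decomp (v : ℕ) : (stg k M v - 1) * Fv k M + v % Fv k M = v := by
  unfold stg
  simp only [Nat.add_sub_cancel]
  rw [Nat.mul_comm]
  exact Nat.div_add_mod v _

/-- Membership facts for the groups. -/
lemma mem_Pg {i : ℕ} {v : Fin (Inst k M).n} :
    v ∈ Pg k M i ↔ stg k M (v : ℕ) = i ∧ (v : ℕ) % Fv k M < pp k M i := by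
  unfold Pg; simp

lemma mem_Xg {i : ℕ} {v : Fin (Inst k M).n} :
    v ∈ Xg k M i ↔ stg k M (v : ℕ) = i ∧ ¬ (v : ℕ) % Fv k M < pp k M i := by
  unfold Xg; simp

lemma Xg_zero_empty : Xg k M 0 = ∅ := by
  ext v
  simp only [mem_Xg, Finset.notMem_empty, iff_false]
  have := stg_ge (k := k) (M := M) (v : ℕ)
  rintro ⟨h, -⟩
  omega

/-- Basic unfolding of the instance fields. -/
lemma start_eq (v : Fin (Inst k M).n) : (Inst k M).start v = stg k M (v : ℕ) := rfl

lemma len_eq_P {v : Fin (Inst k M).n} (h : (v : ℕ) % Fv k M < pp k M (stg k M (v:ℕ))) :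
    (Inst k M).len v = 1 := by
  unfold stg at h
  show (if (v : ℕ) % Fv k M < pp k M ((v : ℕ) / Fv k M + 1) then 1 else 2) = 1
  rw [if_pos h]

lemma len_eq_X {v : Fin (Inst k M).n} (h : ¬ (v : ℕ) % Fv k M < pp k M (stg k M (v:ℕ))) :
    (Inst k M).len v = 2 := by
  unfold stg at h
  show (if (v : ℕ) % Fv k M < pp k M ((v : ℕ) / Fv k M + 1) then 1 else 2) = 2
  rw [if_neg h]

lemma rel_eq_P {v : Fin (Inst k M).n} (h : (v : ℕ) % Fv k M < pp k M (stg k M (v:ℕ))) :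
    (Inst k M).rel v = tau k M (stg k M (v:ℕ)) := by
  unfold stg at h ⊢
  show tau k M ((v : ℕ) / Fv k M + 1) +
    (if (v : ℕ) % Fv k M < pp k M ((v : ℕ) / Fv k M + 1) then 0 else 2) = _
  rw [if_pos h, Nat.add_zero]

lemma rel_eq_X {v : Fin (Inst k M).n} (h : ¬ (v : ℕ) % Fv k M < pp k M (stg k M (v:ℕ))) :
    (Inst k M).rel v = tau k M (stg k M (v:ℕ)) + 2 := by
  unfold stg at h ⊢
  show tau k M ((v : ℕ) / Fv k M + 1) +
    (if (v : ℕ) % Fv k M < pp k M ((v : ℕ) / Fv k M + 1) then 0 else 2) = _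
  rw [if_neg h]

lemma len_le (v : Fin (Inst k M).n) : (Inst k M).len v ≤ 2 := by
  show (if (v : ℕ) % Fv k M < pp k M ((v : ℕ) / Fv k M + 1) then 1 else 2) ≤ 2
  split <;> omega

lemma len_pos (v : Fin (Inst k M).n) : 1 ≤ (Inst k M).len v := by
  show 1 ≤ (if (v : ℕ) % Fv k M < pp k M ((v : ℕ) / Fv k M + 1) then 1 else 2)
  split <;> omega

/-- At stage `k` every packet has length 1. -/
lemma stage_k_isP (hM : 2 ≤ M) (v : Fin (Inst k M).n) (h : stg k M (v:ℕ) = k) :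
    (v : ℕ) % Fv k M < pp k M (stg k M (v:ℕ)) := by
  rw [h]
  unfold pp
  rw [if_pos rfl]
  exact rv_lt hM v

/-- Classification of the hops at router `i`. -/
lemma pool (hM : 2 ≤ M) {v : Fin (Inst k M).n} {j i : ℕ}
    (hj : j < (Inst k M).len v) (hr : (Inst k M).start v + j = i) :
    (j = 0 ∧ (v ∈ Pg k M i ∨ v ∈ Xg k M i)) ∨ (j = 1 ∧ v ∈ Xg k M (i - 1)) := by
  have hlen := len_le v
  have hst := start_eq v
  have hj01 : j = 0 ∨ j = 1 := by omega
  rcases hj01 with rfl | rfl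
  · left
    refine ⟨rfl, ?_⟩
    have hstg : stg k M (v:ℕ) = i := by omega
    by_cases hP : (v : ℕ) % Fv k M < pp k M i
    · exact Or.inl (mem_Pg.mpr ⟨hstg, hP⟩)
    · exact Or.inr (mem_Xg.mpr ⟨hstg, hP⟩)
  · right
    have hX : ¬ (v : ℕ) % Fv k M < pp k M (stg k M (v:ℕ)) := by
      intro hP
      rw [len_eq_P hP] at hj
      omega
    have hstg : stg k M (v:ℕ) = i - 1 := by omega
    exact ⟨rfl, mem_Xg.mpr ⟨hstg, hstg ▸ hX⟩⟩

/-- Cardinality of `Pg`. -/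
lemma card_Pg (hM : 2 ≤ M) (i : ℕ) (h1 : 1 ≤ i) (h2 : i ≤ k) :
    (Pg k M i).card = pp k M i := by
  have hF := Fpos (k := k) hM
  have hppF := pp_le_F (k := k) (M := M) i
  have him : (Pg k M i).image Fin.val =
      Finset.Ico ((i - 1) * Fv k M) ((i - 1) * Fv k M + pp k M i) := by
    ext x
    simp only [Finset.mem_image, Finset.mem_Ico, mem_Pg]
    constructor
    · rintro ⟨v, ⟨hs, hp⟩, rfl⟩
      have hd := v_decomp (k := k) (M := M) (v : ℕ)
      rw [hs] at hd
      omega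
    · rintro ⟨hlo, hhi⟩
      have hmul : (i - 1) * Fv k M + Fv k M = i * Fv k M := pred_mul i _ h1
      have hxk : x < k * Fv k M := by
        have h3 : i * Fv k M ≤ k * Fv k M := Nat.mul_le_mul_right _ h2
        omega
      have hdiv : x / Fv k M = i - 1 := by
        apply Nat.div_eq_of_lt_le hlo
        have : (i - 1 + 1) * Fv k M = (i-1) * Fv k M + Fv k M := by ring
        omega
      have hmod : x % Fv k M = x - (i-1) * Fv k M := by
        have h4 := Nat.div_add_mod x (Fv k M)
        rw [hdiv] at h4
        have : Fv k M * (i - 1) = (i - 1) * Fv k M := Nat.mul_comm _ _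
        omega
      exact ⟨⟨x, hxk⟩, ⟨by show x / Fv k M + 1 = i; omega,
        by show x % Fv k M < pp k M i; omega⟩, rfl⟩
  have hinj : (Pg k M i).card = ((Pg k M i).image Fin.val).card :=
    (Finset.card_image_of_injective _ Fin.val_injective).symm
  rw [hinj, him, Nat.card_Ico]
  omega

/-- Cardinality of `Xg`. -/
lemma card_Xg (hM : 2 ≤ M) (i : ℕ) (h1 : 1 ≤ i) (h2 : i < k) :
    (Xg k M i).card = xx k M i := by
  have hF := Fpos (k := k) hM
  have hppF := pp_le_F (k := k) (M := M) i
  have hmul : (i - 1) * Fv k M + Fv k M = i * Fv k M := pred_mul i _ h1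
  have him : (Xg k M i).image Fin.val =
      Finset.Ico ((i - 1) * Fv k M + pp k M i) (i * Fv k M) := by
    ext x
    simp only [Finset.mem_image, Finset.mem_Ico, mem_Xg]
    constructor
    · rintro ⟨v, ⟨hs, hp⟩, rfl⟩
      have hd := v_decomp (k := k) (M := M) (v : ℕ)
      have hrv := rv_lt hM v
      rw [hs] at hd
      omega
    · rintro ⟨hlo, hhi⟩
      have hxk : x < k * Fv k M := by
        have h3 : i * Fv k M ≤ k * Fv k M := Nat.mul_le_mul_right _ (by omega)
        omega
      have hdiv : x / Fv k M = i - 1 := by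
        apply Nat.div_eq_of_lt_le (by omega)
        have : (i - 1 + 1) * Fv k M = (i-1) * Fv k M + Fv k M := by ring
        omega
      have hmod : x % Fv k M = x - (i-1) * Fv k M := by
        have h4 := Nat.div_add_mod x (Fv k M)
        rw [hdiv] at h4
        have : Fv k M * (i - 1) = (i - 1) * Fv k M := Nat.mul_comm _ _
        omega
      exact ⟨⟨x, hxk⟩, ⟨by show x / Fv k M + 1 = i; omega,
        by show ¬ x % Fv k M < pp k M i; omega⟩, rfl⟩
  have hinj : (Xg k M i).card = ((Xg k M i).image Fin.val).card :=
    (Finset.card_image_of_injective _ Fin.val_injective).symm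
  rw [hinj, him, Nat.card_Ico]
  have := pp_add_xx (k := k) (M := M) i h1 h2
  omega

lemma card_Xg' (hM : 2 ≤ M) (i : ℕ) (h2 : i < k) :
    (Xg k M i).card = xx k M i := by
  rcases Nat.eq_zero_or_pos i with h | h
  · subst h; rw [Xg_zero_empty, xx_zero]; rfl
  · exact card_Xg hM i h h2

lemma valid (hM : 2 ≤ M) : (Inst k M).Valid := by
  intro v
  refine ⟨Nat.le_add_left _ _, len_pos v, ?_⟩
  have hle := stg_le hM v
  have hst := start_eq v
  by_cases hP : (v : ℕ) % Fv k M < pp k M (stg k M (v:ℕ))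
  · rw [len_eq_P hP]; omega
  · rw [len_eq_X hP]
    have : stg k M (v:ℕ) ≠ k := by
      intro h
      exact hP (stage_k_isP hM v h)
    omega

lemma short : (Inst k M).Short := by
  intro v
  by_cases hP : (v : ℕ) % Fv k M < pp k M (stg k M (v:ℕ))
  · exact Or.inl (len_eq_P hP)
  · exact Or.inr (len_eq_X hP)

end Struct

end GreedyLB
namespace GreedyLB

/-- The near-optimal schedule: the length-2 packets of stage `i` are forwarded
immediately at times `tau i + 2 + r` (first hop) and `tau i + 3 + r` (second hop),
and then the length-1 packets of stage `i` at times `tau i + 2 + xx i + r`. -/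
def Sopt (k M : ℕ) : PInstance.Sched (Inst k M) := fun v j =>
  if (v : ℕ) % Fv k M < pp k M (stg k M (v : ℕ)) then
    tau k M (stg k M (v : ℕ)) + 2 + xx k M (stg k M (v : ℕ)) + (v : ℕ) % Fv k M
  else
    tau k M (stg k M (v : ℕ)) + 2 + ((v : ℕ) % Fv k M - pp k M (stg k M (v : ℕ))) + j

section Opt

variable {k M : ℕ}

lemma xx_k : xx k M k = 0 := by unfold xx; rw [if_neg (by omega)]

lemma stg_lt_of_X (hM : 2 ≤ M) {v : Fin (Inst k M).n}
    (h : ¬ (v : ℕ) % Fv k M < pp k M (stg k M (v:ℕ))) : stg k M (v:ℕ) < k := by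
  have h1 := stg_le hM v
  rcases Nat.lt_or_ge (stg k M (v:ℕ)) k with h2 | h2
  · exact h2
  · exact absurd (stage_k_isP hM v (by omega)) h

lemma rv_sub_lt (hM : 2 ≤ M) {v : Fin (Inst k M).n}
    (h : ¬ (v : ℕ) % Fv k M < pp k M (stg k M (v:ℕ))) :
    (v : ℕ) % Fv k M - pp k M (stg k M (v:ℕ)) < xx k M (stg k M (v:ℕ)) := by
  have h1 := stg_lt_of_X hM h
  have h2 := pp_add_xx (k := k) (M := M) _ (stg_ge (v:ℕ)) h1
  have h3 := rv_lt hM v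
  omega

lemma Sopt_feasible (hM : 2 ≤ M) : PInstance.Feasible (Inst k M) (Sopt k M) := by
  constructor
  · intro v j hj
    by_cases hP : (v : ℕ) % Fv k M < pp k M (stg k M (v:ℕ))
    · rw [len_eq_P hP] at hj
      have hj0 : j = 0 := by omega
      subst hj0
      show (Inst k M).rel v ≤ _
      rw [rel_eq_P hP]
      unfold Sopt
      rw [if_pos hP]
      omega
    · rw [len_eq_X hP] at hj
      have hj01 : j = 0 ∨ j = 1 := by omega
      rcases hj01 with rfl | rfl
      · show (Inst k M).rel v ≤ _
        rw [rel_eq_X hP]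
        unfold Sopt
        rw [if_neg hP]
        omega
      · show Sopt k M v 0 + 1 ≤ _
        unfold Sopt
        simp only [if_neg hP]
        omega
  · intro u v jp jq hjp hjq hr ht
    -- helper: conclude equality of packets from stage and offset equality
    have conclude : stg k M (u:ℕ) = stg k M (v:ℕ) →
        (u : ℕ) % Fv k M = (v : ℕ) % Fv k M → u = v := by
      intro h1 h2
      apply Fin.ext
      rw [← v_decomp (k := k) (M := M) (u:ℕ), ← v_decomp (k := k) (M := M) (v:ℕ), h1, h2]
    have hsu1 := stg_ge (k := k) (M := M) (u:ℕ)
    have hsv1 := stg_ge (k := k) (M := M) (v:ℕ)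
    rw [start_eq, start_eq] at hr
    by_cases hPu : (u : ℕ) % Fv k M < pp k M (stg k M (u:ℕ)) <;>
      by_cases hPv : (v : ℕ) % Fv k M < pp k M (stg k M (v:ℕ))
    · -- both length 1 : jp = jq = 0, same stage
      rw [len_eq_P hPu] at hjp
      rw [len_eq_P hPv] at hjq
      have hjp0 : jp = 0 := by omega
      have hjq0 : jq = 0 := by omega
      subst hjp0; subst hjq0
      have hs : stg k M (u:ℕ) = stg k M (v:ℕ) := by omega
      unfold Sopt at ht
      rw [if_pos hPu, if_pos hPv, hs] at ht
      exact conclude hs (by omega)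
    · -- u length 1, v length 2
      rw [len_eq_P hPu] at hjp
      have hjp0 : jp = 0 := by omega
      subst hjp0
      rw [len_eq_X hPv] at hjq
      have hxv := rv_sub_lt hM hPv
      unfold Sopt at ht
      rw [if_pos hPu, if_neg hPv] at ht
      have hjq01 : jq = 0 ∨ jq = 1 := by omega
      rcases hjq01 with rfl | rfl
      · -- same stage; times disjoint
        have hs : stg k M (u:ℕ) = stg k M (v:ℕ) := by omega
        rw [hs] at ht hPu
        omega
      · -- stage of u = stage of v + 1
        have hs : stg k M (u:ℕ) = stg k M (v:ℕ) + 1 := by omega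
        have htau := tau_succ (k := k) (M := M) (stg k M (v:ℕ)) hsv1
        rw [hs] at ht
        omega
    · -- u length 2, v length 1
      rw [len_eq_P hPv] at hjq
      have hjq0 : jq = 0 := by omega
      subst hjq0
      rw [len_eq_X hPu] at hjp
      have hxu := rv_sub_lt hM hPu
      unfold Sopt at ht
      rw [if_neg hPu, if_pos hPv] at ht
      have hjp01 : jp = 0 ∨ jp = 1 := by omega
      rcases hjp01 with rfl | rfl
      · have hs : stg k M (u:ℕ) = stg k M (v:ℕ) := by omega
        rw [hs] at ht hPu hxu
        omega
      · have hs : stg k M (v:ℕ) = stg k M (u:ℕ) + 1 := by omega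
        have htau := tau_succ (k := k) (M := M) (stg k M (u:ℕ)) hsu1
        rw [hs] at ht
        omega
    · -- both length 2
      rw [len_eq_X hPu] at hjp
      rw [len_eq_X hPv] at hjq
      have hxu := rv_sub_lt hM hPu
      have hxv := rv_sub_lt hM hPv
      unfold Sopt at ht
      rw [if_neg hPu, if_neg hPv] at ht
      have hjp01 : jp = 0 ∨ jp = 1 := by omega
      have hjq01 : jq = 0 ∨ jq = 1 := by omega
      rcases hjp01 with rfl | rfl <;> rcases hjq01 with rfl | rfl
      · have hs : stg k M (u:ℕ) = stg k M (v:ℕ) := by omega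
        rw [hs] at ht hPu hxu
        exact conclude hs (by omega)
      · have hs : stg k M (u:ℕ) = stg k M (v:ℕ) + 1 := by omega
        have htau := tau_succ (k := k) (M := M) (stg k M (v:ℕ)) hsv1
        rw [hs] at ht
        omega
      · have hs : stg k M (v:ℕ) = stg k M (u:ℕ) + 1 := by omega
        have htau := tau_succ (k := k) (M := M) (stg k M (u:ℕ)) hsu1
        rw [hs] at ht
        omega
      · have hs : stg k M (u:ℕ) = stg k M (v:ℕ) := by omega
        rw [hs] at ht hPu hxu
        exact conclude hs (by omega)

lemma cost_Sopt (hM : 2 ≤ M) : PInstance.cost (Inst k M) (Sopt k M) ≤ Fv k M + 2 := by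
  apply Finset.sup_le
  intro v _
  unfold PInstance.flowTime PInstance.comp
  by_cases hP : (v : ℕ) % Fv k M < pp k M (stg k M (v:ℕ))
  · rw [len_eq_P hP, rel_eq_P hP]
    unfold Sopt
    rw [if_pos hP]
    -- flow = xx s + rv + 3 ≤ F + 2
    have hs1 := stg_ge (k := k) (M := M) (v:ℕ)
    have hs2 := stg_le hM v
    rcases Nat.lt_or_ge (stg k M (v:ℕ)) k with h | h
    · have := pp_add_xx (k := k) (M := M) _ hs1 h
      omega
    · have hsk : stg k M (v:ℕ) = k := by omega
      have h0 : xx k M (stg k M (v:ℕ)) = 0 := by rw [hsk]; exact xx_k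
      have h1 : (v:ℕ) % Fv k M < Fv k M := rv_lt hM v
      omega
  · rw [len_eq_X hP, rel_eq_X hP]
    unfold Sopt
    rw [if_neg hP]
    have h1 := rv_sub_lt hM hP
    have h2 := xx_le_F (k := k) (M := M) (stg k M (v:ℕ))
    omega

lemma opt_le (hM : 2 ≤ M) : (Inst k M).opt ≤ Fv k M + 2 := by
  have hmem : PInstance.cost (Inst k M) (Sopt k M) ∈
      {c | ∃ S : PInstance.Sched (Inst k M), PInstance.Feasible (Inst k M) S ∧
        PInstance.cost (Inst k M) S = c} :=
    ⟨Sopt k M, Sopt_feasible hM, rfl⟩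
  exact le_trans (Nat.sInf_le hmem) (cost_Sopt hM)

end Opt

end GreedyLB
namespace GreedyLB

section Greedy

variable {k M : ℕ} {S : PInstance.Sched (Inst k M)}

lemma hop0_ge (hS : PInstance.IsGreedy (Inst k M) S) (v : Fin (Inst k M).n) :
    (Inst k M).rel v ≤ S v 0 :=
  hS.1.1 v 0 (len_pos v)

lemma hop1_ge (hS : PInstance.IsGreedy (Inst k M) S) {v : Fin (Inst k M).n}
    (h : ¬ (v : ℕ) % Fv k M < pp k M (stg k M (v:ℕ))) :
    S v 0 + 1 ≤ S v 1 :=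
  hS.1.1 v 1 (by rw [len_eq_X h]; omega)

/-- The packet served at a given (time, router) has maximal priority among waiting ones. -/
lemma greedy_max (hS : PInstance.IsGreedy (Inst k M) S) {q : Fin (Inst k M).n}
    {jq t i : ℕ} (hw : PInstance.Waiting (Inst k M) S q jq t)
    (hi : (Inst k M).start q + jq = i) (hserve : S q jq = t) :
    ∀ w jw, PInstance.Waiting (Inst k M) S w jw t → (Inst k M).start w + jw = i →
      PInstance.prio (Inst k M) S w t ≤ PInstance.prio (Inst k M) S q t := by
  obtain ⟨q', jq', hw', hi', hs', hmax⟩ := hS.2 t i ⟨q, jq, hw, hi⟩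
  have hqq : q' = q := hS.1.2 q' q jq' jq hw'.1 hw.1 (hi'.trans hi.symm) (hs'.trans hserve.symm)
  subst hqq
  exact hmax

lemma remLen_P {t : ℕ} {v : Fin (Inst k M).n}
    (hP : (v : ℕ) % Fv k M < pp k M (stg k M (v:ℕ))) (h : t ≤ S v 0) :
    PInstance.remLen (Inst k M) S v t = 1 := by
  unfold PInstance.remLen
  have hset : {j : ℕ | j < (Inst k M).len v ∧ t ≤ S v j} = {0} := by
    rw [len_eq_P hP]
    ext j
    simp only [Set.mem_setOf_eq, Set.mem_singleton_iff]
    constructor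
    · rintro ⟨h1, -⟩; omega
    · rintro rfl; exact ⟨by omega, h⟩
  rw [hset, Set.ncard_singleton]

lemma remLen_X2 (hS : PInstance.IsGreedy (Inst k M) S) {t : ℕ} {v : Fin (Inst k M).n}
    (hX : ¬ (v : ℕ) % Fv k M < pp k M (stg k M (v:ℕ))) (h : t ≤ S v 0) :
    PInstance.remLen (Inst k M) S v t = 2 := by
  have h1 := hop1_ge hS hX
  unfold PInstance.remLen
  have hset : {j : ℕ | j < (Inst k M).len v ∧ t ≤ S v j} = {0, 1} := by
    rw [len_eq_X hX]
    ext j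
    simp only [Set.mem_setOf_eq, Set.mem_insert_iff, Set.mem_singleton_iff]
    constructor
    · rintro ⟨h2, -⟩; omega
    · rintro (rfl | rfl)
      · exact ⟨by omega, h⟩
      · exact ⟨by omega, by omega⟩
  rw [hset, Set.ncard_pair (by omega)]

lemma remLen_X1 {t : ℕ} {v : Fin (Inst k M).n}
    (hX : ¬ (v : ℕ) % Fv k M < pp k M (stg k M (v:ℕ)))
    (h0 : S v 0 < t) (h1 : t ≤ S v 1) :
    PInstance.remLen (Inst k M) S v t = 1 := by
  unfold PInstance.remLen
  have hset : {j : ℕ | j < (Inst k M).len v ∧ t ≤ S v j} = {1} := by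
    rw [len_eq_X hX]
    ext j
    simp only [Set.mem_setOf_eq, Set.mem_singleton_iff]
    constructor
    · rintro ⟨h2, h3⟩
      rcases (by omega : j = 0 ∨ j = 1) with rfl | rfl
      · omega
      · rfl
    · rintro rfl; exact ⟨by omega, h1⟩
  rw [hset, Set.ncard_singleton]

/-- Main induction: in any greedy schedule, the length-2 packets of stage `i`
take their first hop no earlier than `tau i + xx i`. -/
lemma X_LB (hk : 2 ≤ k) (hM : 2 ≤ M) (hS : PInstance.IsGreedy (Inst k M) S) :
    ∀ i, 1 ≤ i → i < k → ∀ q ∈ Xg k M i, tau k M i + xx k M i ≤ S q 0 := by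
  intro i
  induction i using Nat.strong_induction_on with
  | _ i IH =>
  intro h1 h2 q hq
  by_contra hcon
  push_neg at hcon
  obtain ⟨hqs, hqP⟩ := mem_Xg.mp hq
  have hqP' : ¬ (q : ℕ) % Fv k M < pp k M (stg k M (q:ℕ)) := by rw [hqs]; exact hqP
  set u := S q 0 with hu
  have hlen : (Inst k M).len q = 2 := len_eq_X hqP'
  have hrel : (Inst k M).rel q = tau k M i + 2 := by rw [rel_eq_X hqP', hqs]
  have hu2 : tau k M i + 2 ≤ u := by rw [hu, ← hrel]; exact hop0_ge hS q
  have hwq : PInstance.Waiting (Inst k M) S q 0 u :=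
    ⟨by rw [hlen]; omega, by show (Inst k M).rel q ≤ u; omega, le_refl u⟩
  have hrout : (Inst k M).start q + 0 = i := by rw [start_eq]; omega
  have hmax := greedy_max hS hwq hrout rfl
  have hprioq : PInstance.prio (Inst k M) S q u = (u - (tau k M i + 2)) + 2 := by
    unfold PInstance.prio
    rw [remLen_X2 hS hqP' (le_refl u), hrel]
  -- Step 1: all stage-i length-1 packets have been served before u
  have hPserved : ∀ r ∈ Pg k M i, S r 0 < u := by
    intro r hr
    obtain ⟨hrs, hrP⟩ := mem_Pg.mp hr
    have hrP' : (r : ℕ) % Fv k M < pp k M (stg k M (r:ℕ)) := by rw [hrs]; exact hrP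
    by_contra hge
    push_neg at hge
    have hrrel : (Inst k M).rel r = tau k M i := by rw [rel_eq_P hrP', hrs]
    have hwr : PInstance.Waiting (Inst k M) S r 0 u :=
      ⟨by rw [len_eq_P hrP']; omega, by show (Inst k M).rel r ≤ u; omega, hge⟩
    have hprior : PInstance.prio (Inst k M) S r u = (u - tau k M i) + 1 := by
      unfold PInstance.prio
      rw [remLen_P hrP' hge, hrrel]
    have := hmax r 0 hwr (by rw [start_eq]; omega)
    omega
  -- the set of stage-(i-1) length-2 packets whose second hop is already done
  set done := (Xg k M (i-1)).filter (fun w => S w 1 < u) with hdone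
  -- Step 2: every arrived stage-(i-1) packet is done
  have harrived_done : ∀ w ∈ Xg k M (i-1), S w 0 < u → S w 1 < u := by
    intro w hw h0
    by_contra hge
    push_neg at hge
    obtain ⟨hws, hwP⟩ := mem_Xg.mp hw
    have hwP' : ¬ (w : ℕ) % Fv k M < pp k M (stg k M (w:ℕ)) := by rw [hws]; exact hwP
    have hi1 : 1 ≤ i - 1 := by have := stg_ge (k := k) (M := M) (w:ℕ); omega
    have hwrel : (Inst k M).rel w = tau k M (i-1) + 2 := by rw [rel_eq_X hwP', hws]
    have hwait : PInstance.Waiting (Inst k M) S w 1 u :=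
      ⟨by rw [len_eq_X hwP']; omega, by show S w 0 + 1 ≤ u; omega, hge⟩
    have hwrout : (Inst k M).start w + 1 = i := by rw [start_eq, hws]; omega
    have hpriow : PInstance.prio (Inst k M) S w u = (u - (tau k M (i-1) + 2)) + 1 := by
      unfold PInstance.prio
      rw [remLen_X1 hwP' h0 hge, hwrel]
    have htau : tau k M i = tau k M (i-1) + xx k M (i-1) + 1 := tau_pred i (by omega)
    have hxx1 : 2 ≤ xx k M (i-1) := xx_pos hk hM (i-1) hi1 (by omega)
    have := hmax w 1 hwait hwrout
    omega
  -- Step 3: counting at router i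
  have hdisj : Disjoint (Pg k M i) done := by
    rw [Finset.disjoint_left]
    intro a ha hb
    obtain ⟨has, -⟩ := mem_Pg.mp ha
    obtain ⟨hbs, -⟩ := mem_Xg.mp (Finset.mem_of_mem_filter a hb)
    omega
  have hJ1 : pp k M i + done.card ≤ u - tau k M i := by
    have hclass : ∀ w ∈ Pg k M i ∪ done, ∃ jw, jw < (Inst k M).len w ∧
        (Inst k M).start w + jw = i ∧
        (if (w : ℕ) % Fv k M < pp k M (stg k M (w:ℕ)) then S w 0 else S w 1) = S w jw ∧
        S w jw ∈ Finset.Ico (tau k M i) u := by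
      intro w hw
      rcases Finset.mem_union.mp hw with hw | hw
      · obtain ⟨hws, hwP⟩ := mem_Pg.mp hw
        have hwP' : (w : ℕ) % Fv k M < pp k M (stg k M (w:ℕ)) := by rw [hws]; exact hwP
        refine ⟨0, by rw [len_eq_P hwP']; omega, by rw [start_eq]; omega, by rw [if_pos hwP'], ?_⟩
        rw [Finset.mem_Ico]
        have h3 := hop0_ge hS w
        rw [rel_eq_P hwP', hws] at h3
        exact ⟨h3, hPserved w hw⟩
      · have hwX := Finset.mem_of_mem_filter w hw
        have hlt := (Finset.mem_filter.mp hw).2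
        obtain ⟨hws, hwP⟩ := mem_Xg.mp hwX
        have hwP' : ¬ (w : ℕ) % Fv k M < pp k M (stg k M (w:ℕ)) := by rw [hws]; exact hwP
        have hi1 : 1 ≤ i - 1 := by have := stg_ge (k := k) (M := M) (w:ℕ); omega
        refine ⟨1, by rw [len_eq_X hwP']; omega, by rw [start_eq, hws]; omega,
          by rw [if_neg hwP'], ?_⟩
        rw [Finset.mem_Ico]
        refine ⟨?_, hlt⟩
        have hLB := IH (i-1) (by omega) hi1 (by omega) w hwX
        have h4 := hop1_ge hS hwP'
        have htau : tau k M i = tau k M (i-1) + xx k M (i-1) + 1 := tau_pred i (by omega)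
        omega
    have hcard : (Pg k M i ∪ done).card ≤ (Finset.Ico (tau k M i) u).card := by
      apply Finset.card_le_card_of_injOn
        (fun w : Fin (Inst k M).n => if (w : ℕ) % Fv k M < pp k M (stg k M (w:ℕ)) then S w 0 else S w 1)
      · intro w hw
        obtain ⟨jw, -, -, he, hmem⟩ := hclass w hw
        simp only [Finset.mem_coe]; rw [he]; exact hmem
      · intro a ha b hb heq
        simp only at heq
        obtain ⟨ja, hja, hra, hea, -⟩ := hclass a ha
        obtain ⟨jb, hjb, hrb, heb, -⟩ := hclass b hb
        rw [hea, heb] at heq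
        exact hS.1.2 a b ja jb hja hjb (hra.trans hrb.symm) heq
    rw [Finset.card_union_of_disjoint hdisj, Nat.card_Ico,
      card_Pg hM i h1 (by omega)] at hcard
    exact hcard
  by_cases hall : ∀ w ∈ Xg k M (i-1), S w 0 < u
  · -- all arrived, hence all done
    have hdone_eq : done = Xg k M (i-1) := by
      rw [hdone]
      apply Finset.filter_true_of_mem
      intro w hw
      exact harrived_done w hw (hall w hw)
    have hcardd : done.card = xx k M (i-1) := by
      rw [hdone_eq]; exact card_Xg' hM (i-1) (by omega)
    have hxxrec := xx_rec (M := M) hk i h1 h2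
    omega
  · push_neg at hall
    obtain ⟨wst, hwst, hgest⟩ := hall
    obtain ⟨hwsts, hwstP⟩ := mem_Xg.mp hwst
    have hwstP' : ¬ (wst : ℕ) % Fv k M < pp k M (stg k M (wst:ℕ)) := by
      rw [hwsts]; exact hwstP
    have hi1 : 1 ≤ i - 1 := by have := stg_ge (k := k) (M := M) (wst:ℕ); omega
    have hwstrel : (Inst k M).rel wst = tau k M (i-1) + 2 := by rw [rel_eq_X hwstP', hwsts]
    set arrived := (Xg k M (i-1)).filter (fun w => S w 0 < u) with harr
    have harrsub : arrived ⊆ done := by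
      intro w hw
      have h1' := Finset.mem_filter.mp hw
      exact Finset.mem_filter.mpr ⟨h1'.1, harrived_done w h1'.1 h1'.2⟩
    -- Step 5 : counting at router i-1
    have hJ2 : u - (tau k M (i-1) + 2) ≤
        pp k M (i-1) + xx k M (i-1-1) + arrived.card := by
      classical
      set T2 := (Pg k M (i-1) ∪ Xg k M (i-1-1)) ∪ arrived with hT2
      have hcard2 : (Finset.Ico (tau k M (i-1) + 2) u).card ≤ T2.card := by
        apply Finset.card_le_card_of_injOn
          (fun v => if h : ∃ w jw, PInstance.Waiting (Inst k M) S w jw v ∧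
              (Inst k M).start w + jw = i - 1 ∧ S w jw = v then h.choose else q)
        · intro v hv
          simp only [Finset.mem_coe] at hv ⊢
          rw [Finset.mem_Ico] at hv
          have hwwait : PInstance.Waiting (Inst k M) S wst 0 v :=
            ⟨by rw [len_eq_X hwstP']; omega, by show (Inst k M).rel wst ≤ v; omega, by omega⟩
          obtain ⟨q', jq', hw', hi', hs', -⟩ := hS.2 v (i-1)
            ⟨wst, 0, hwwait, by rw [start_eq]; omega⟩
          have hex : ∃ w jw, PInstance.Waiting (Inst k M) S w jw v ∧
              (Inst k M).start w + jw = i - 1 ∧ S w jw = v := ⟨q', jq', hw', hi', hs'⟩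
          rw [dif_pos hex]
          obtain ⟨jw, hww, hwr, hws⟩ := hex.choose_spec
          rcases pool hM hww.1 hwr with ⟨-, hmem | hmem⟩ | ⟨hj1, hmem⟩
          · exact Finset.mem_union_left _ (Finset.mem_union_left _ hmem)
          · -- arrived
            apply Finset.mem_union_right
            refine Finset.mem_filter.mpr ⟨hmem, ?_⟩
            have : S hex.choose 0 = v := by
              have hj0 : jw = 0 := by
                obtain ⟨hs0, -⟩ := mem_Xg.mp hmem
                have := start_eq (k := k) (M := M) hex.choose
                omega
              rw [← hj0]; exact hws
            omega
          · exact Finset.mem_union_left _ (Finset.mem_union_right _ hmem)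
        · intro a ha b hb heq
          simp only at heq
          rw [Finset.mem_coe, Finset.mem_Ico] at ha hb
          have hexa : ∃ w jw, PInstance.Waiting (Inst k M) S w jw a ∧
              (Inst k M).start w + jw = i - 1 ∧ S w jw = a := by
            have hwwait : PInstance.Waiting (Inst k M) S wst 0 a :=
              ⟨by rw [len_eq_X hwstP']; omega, by show (Inst k M).rel wst ≤ a; omega, by omega⟩
            obtain ⟨q', jq', hw', hi', hs', -⟩ := hS.2 a (i-1)
              ⟨wst, 0, hwwait, by rw [start_eq]; omega⟩
            exact ⟨q', jq', hw', hi', hs'⟩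
          have hexb : ∃ w jw, PInstance.Waiting (Inst k M) S w jw b ∧
              (Inst k M).start w + jw = i - 1 ∧ S w jw = b := by
            have hwwait : PInstance.Waiting (Inst k M) S wst 0 b :=
              ⟨by rw [len_eq_X hwstP']; omega, by show (Inst k M).rel wst ≤ b; omega, by omega⟩
            obtain ⟨q', jq', hw', hi', hs', -⟩ := hS.2 b (i-1)
              ⟨wst, 0, hwwait, by rw [start_eq]; omega⟩
            exact ⟨q', jq', hw', hi', hs'⟩
          rw [dif_pos hexa, dif_pos hexb] at heq
          obtain ⟨ja, hwa, hra, hsa⟩ := hexa.choose_spec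
          obtain ⟨jb, hwb, hrb, hsb⟩ := hexb.choose_spec
          have hj : ja = jb := by
            have h5 := hra
            have h6 := hrb
            rw [heq] at h5
            omega
          rw [← hsa, ← hsb, heq, hj]
      have hc1 : T2.card ≤ pp k M (i-1) + xx k M (i-1-1) + arrived.card := by
        calc T2.card ≤ (Pg k M (i-1) ∪ Xg k M (i-1-1)).card + arrived.card :=
              Finset.card_union_le _ _
          _ ≤ (Pg k M (i-1)).card + (Xg k M (i-1-1)).card + arrived.card := by
              have := Finset.card_union_le (Pg k M (i-1)) (Xg k M (i-1-1))
              omega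
          _ = pp k M (i-1) + xx k M (i-1-1) + arrived.card := by
              rw [card_Pg hM (i-1) hi1 (by omega), card_Xg' hM (i-1-1) (by omega)]
      rw [Nat.card_Ico] at hcard2
      omega
    have hxxrec1 := xx_rec (M := M) hk (i-1) hi1 (by omega)
    have htau : tau k M i = tau k M (i-1) + xx k M (i-1) + 1 := tau_pred i (by omega)
    have hppues := pp_pos (k := k) hM i
    have hsub : arrived.card ≤ done.card := Finset.card_le_card harrsub
    omega

end Greedy

end GreedyLB
namespace GreedyLB

section Final

variable {k M : ℕ} {S : PInstance.Sched (Inst k M)}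

lemma pp_k : pp k M k = Fv k M := by unfold pp; rw [if_pos rfl]

lemma xx_km1 (hk : 2 ≤ k) : xx k M (k-1) = Fv k M - M := by
  unfold xx
  rw [if_pos ⟨by omega, by omega⟩]
  have h0 : k - 1 - (k-1) = 0 := by omega
  rw [h0, pow_zero, one_mul]

/-- In any greedy schedule some packet has flow time at least `F + (F - M)`. -/
lemma cost_ge (hk : 2 ≤ k) (hM : 2 ≤ M) (hS : PInstance.IsGreedy (Inst k M) S) :
    Fv k M + (Fv k M - M) ≤ PInstance.cost (Inst k M) S := by
  classical
  have hF2 : 2 ≤ Fv k M := le_trans hM (Nat.le_mul_of_pos_left M (Nat.pow_pos (by norm_num)))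
  set c := Fv k M + (Fv k M - M) with hc
  set T := Pg k M k ∪ Xg k M (k-1) with hT
  have hdisj : Disjoint (Pg k M k) (Xg k M (k-1)) := by
    rw [Finset.disjoint_left]
    intro a ha hb
    obtain ⟨has, -⟩ := mem_Pg.mp ha
    obtain ⟨hbs, -⟩ := mem_Xg.mp hb
    omega
  have hcardT : T.card = c := by
    rw [hT, Finset.card_union_of_disjoint hdisj, card_Pg hM k (by omega) le_rfl,
      card_Xg hM (k-1) (by omega) (by omega), pp_k, xx_km1 hk]
  have htauk : tau k M k = tau k M (k-1) + xx k M (k-1) + 1 := tau_pred k (by omega)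
  have hclass : ∀ w ∈ T, ∃ jw, jw < (Inst k M).len w ∧
      (Inst k M).start w + jw = k ∧
      (if (w : ℕ) % Fv k M < pp k M (stg k M (w:ℕ)) then S w 0 else S w 1) = S w jw ∧
      tau k M k ≤ S w jw := by
    intro w hw
    rcases Finset.mem_union.mp hw with hw | hw
    · obtain ⟨hws, hwP⟩ := mem_Pg.mp hw
      have hwP' : (w : ℕ) % Fv k M < pp k M (stg k M (w:ℕ)) := by rw [hws]; exact hwP
      refine ⟨0, by rw [len_eq_P hwP']; omega, by rw [start_eq]; omega, by rw [if_pos hwP'], ?_⟩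
      have h3 := hop0_ge hS w
      rw [rel_eq_P hwP', hws] at h3
      exact h3
    · obtain ⟨hws, hwP⟩ := mem_Xg.mp hw
      have hwP' : ¬ (w : ℕ) % Fv k M < pp k M (stg k M (w:ℕ)) := by rw [hws]; exact hwP
      refine ⟨1, by rw [len_eq_X hwP']; omega, by rw [start_eq]; omega, by rw [if_neg hwP'], ?_⟩
      have hLB := X_LB hk hM hS (k-1) (by omega) (by omega) w hw
      have h4 := hop1_ge hS hwP'
      omega
  have hex : ∃ w ∈ T, tau k M k + c - 1 ≤
      (if (w : ℕ) % Fv k M < pp k M (stg k M (w:ℕ)) then S w 0 else S w 1) := by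
    by_contra hno
    push_neg at hno
    have hcard : T.card ≤ (Finset.Ico (tau k M k) (tau k M k + c - 1)).card := by
      apply Finset.card_le_card_of_injOn
        (fun w : Fin (Inst k M).n =>
          if (w : ℕ) % Fv k M < pp k M (stg k M (w:ℕ)) then S w 0 else S w 1)
      · intro w hw
        obtain ⟨jw, -, -, he, hge⟩ := hclass w hw
        simp only [Finset.mem_coe]
        rw [Finset.mem_Ico, he]
        exact ⟨hge, by have := hno w hw; omega⟩
      · intro a ha b hb heq
        simp only at heq
        obtain ⟨ja, hja, hra, hea, -⟩ := hclass a ha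
        obtain ⟨jb, hjb, hrb, heb, -⟩ := hclass b hb
        rw [hea, heb] at heq
        exact hS.1.2 a b ja jb hja hjb (hra.trans hrb.symm) heq
    rw [Nat.card_Ico, hcardT] at hcard
    omega
  obtain ⟨w, hwT, hwge⟩ := hex
  have hflow : c ≤ PInstance.flowTime (Inst k M) S w := by
    rcases Finset.mem_union.mp hwT with hw | hw
    · obtain ⟨hws, hwP⟩ := mem_Pg.mp hw
      have hwP' : (w : ℕ) % Fv k M < pp k M (stg k M (w:ℕ)) := by rw [hws]; exact hwP
      rw [if_pos hwP'] at hwge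
      unfold PInstance.flowTime PInstance.comp
      rw [len_eq_P hwP', rel_eq_P hwP', hws]
      show c ≤ S w 0 + 1 - tau k M k
      omega
    · obtain ⟨hws, hwP⟩ := mem_Xg.mp hw
      have hwP' : ¬ (w : ℕ) % Fv k M < pp k M (stg k M (w:ℕ)) := by rw [hws]; exact hwP
      rw [if_neg hwP'] at hwge
      unfold PInstance.flowTime PInstance.comp
      rw [len_eq_X hwP', rel_eq_X hwP', hws]
      show c ≤ S w 1 + 1 - (tau k M (k-1) + 2)
      have hxx2 : 2 ≤ xx k M (k-1) := xx_pos hk hM (k-1) (by omega) (by omega)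
      omega
  exact le_trans hflow (Finset.le_sup (Finset.mem_univ w))

end Final

end GreedyLB
/-- For every number of routers `k ≥ 2`, the competitive ratio of Greedy
on instances all of whose packets have length `1` or `2` is at least `2 − 1/2^{k−1}`, for
any tie-breaking rule: for every `ε > 0` and every constant `b`, there exists an instance
`I` on `k` routers with all packet lengths in `{1, 2}` such that every schedule Greedy can
produce on `I` has cost greater than `(2 − 1/2^{k−1} − ε)·Opt(I) + b`. -/
theorem greedy_lower_bound (k : ℕ) (hk : 2 ≤ k) (ε : ℝ) (hε : 0 < ε) (b : ℝ) :
    ∃ I : PInstance k, I.Valid ∧ I.Short ∧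
      ∀ S : PInstance.Sched I, I.IsGreedy S →
        (2 - 1 / 2 ^ (k - 1) - ε) * (I.opt : ℝ) + b < (I.cost S : ℝ) := by
  classical
  obtain ⟨m, hm⟩ := exists_nat_gt (max ((b + 4) / ε) b)
  set M := max 2 m with hMdef
  have hM : 2 ≤ M := le_max_left _ _
  refine ⟨GreedyLB.Inst k M, GreedyLB.valid hM, GreedyLB.short, ?_⟩
  intro S hS
  have hcost := GreedyLB.cost_ge hk hM hS
  have hopt := GreedyLB.opt_le (k := k) (M := M) hM
  -- numeric facts
  have h2k : (2:ℕ) ≤ 2 ^ (k - 1) := by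
    calc (2:ℕ) = 2 ^ 1 := (pow_one 2).symm
    _ ≤ 2 ^ (k - 1) := Nat.pow_le_pow_right (by norm_num) (by omega)
  have hMF : M ≤ GreedyLB.Fv k M := by
    unfold GreedyLB.Fv
    calc M ≤ 2 ^ (k-1) * M := Nat.le_mul_of_pos_left M (Nat.pow_pos (by norm_num))
    _ = _ := rfl
  have h2MF : 2 * M ≤ GreedyLB.Fv k M := by
    unfold GreedyLB.Fv
    exact Nat.mul_le_mul_right M h2k
  set F := GreedyLB.Fv k M with hF
  -- cast to the reals
  have hcostR : 2 * (F:ℝ) - M ≤ ((GreedyLB.Inst k M).cost S : ℝ) := by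
    have h1 : ((F + (F - M) : ℕ) : ℝ) ≤ ((GreedyLB.Inst k M).cost S : ℝ) :=
      Nat.cast_le.mpr hcost
    rw [Nat.cast_add, Nat.cast_sub hMF] at h1
    linarith
  have hoptR : ((GreedyLB.Inst k M).opt : ℝ) ≤ (F:ℝ) + 2 := by
    have h1 : (((GreedyLB.Inst k M).opt : ℕ) : ℝ) ≤ ((F + 2 : ℕ) : ℝ) := Nat.cast_le.mpr hopt
    push_cast at h1
    exact h1
  have h2pow : (0:ℝ) < 2 ^ (k - 1) := by positivity
  have hFR : (F:ℝ) = 2 ^ (k-1) * M := by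
    rw [hF]; unfold GreedyLB.Fv; push_cast; ring
  have hkey : (2 - 1 / 2 ^ (k-1)) * (F:ℝ) = 2 * F - M := by
    rw [hFR]; field_simp
  have hmM : (m:ℝ) ≤ (M:ℝ) := Nat.cast_le.mpr (le_max_right _ _)
  have hbM : b < (M:ℝ) := lt_of_lt_of_le (lt_of_le_of_lt (le_max_right ((b+4)/ε) b) hm) hmM
  have hεM : b + 4 < ε * M := by
    have h1 : (b + 4) / ε < (M:ℝ) := lt_of_lt_of_le (lt_of_le_of_lt (le_max_left _ b) hm) hmM
    calc b + 4 = ((b + 4) / ε) * ε := by field_simp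
    _ < M * ε := by
        apply mul_lt_mul_of_pos_right h1 hε
    _ = ε * M := by ring
  have hMFR : (M:ℝ) ≤ (F:ℝ) := Nat.cast_le.mpr hMF
  have hεF : b + 4 < ε * F := by
    have := mul_le_mul_of_nonneg_left hMFR (le_of_lt hε)
    linarith
  have hoptpos : (0:ℝ) ≤ ((GreedyLB.Inst k M).opt : ℝ) := Nat.cast_nonneg _
  have hMR2 : (2:ℝ) ≤ (M:ℝ) := by exact_mod_cast hM
  rcases le_or_gt (2 - 1 / 2 ^ (k - 1) - ε) 0 with hcneg | hcpos
  · -- nonpositive coefficient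
    have h1 : (2 - 1 / 2 ^ (k - 1) - ε) * ((GreedyLB.Inst k M).opt : ℝ) ≤ 0 :=
      mul_nonpos_of_nonpos_of_nonneg hcneg hoptpos
    have h2 : (M:ℝ) ≤ 2 * F - M := by linarith
    linarith
  · have h1 : (2 - 1 / 2 ^ (k - 1) - ε) * ((GreedyLB.Inst k M).opt : ℝ) ≤
        (2 - 1 / 2 ^ (k - 1) - ε) * ((F:ℝ) + 2) :=
      mul_le_mul_of_nonneg_left hoptR (le_of_lt hcpos)
    have hc2 : (0:ℝ) < 1 / 2 ^ (k-1) := by positivity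
    have h3 : (2 - 1 / 2 ^ (k - 1) - ε) * ((F:ℝ) + 2) =
        (2 - 1 / 2 ^ (k-1)) * (F:ℝ) + 2 * (2 - 1 / 2 ^ (k-1)) - ε * F - 2 * ε := by ring
    rw [hkey] at h3
    linarith
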